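/- For f = x^3 + y^4 ∈ ℂ[[x,y]], the ℂ-dimension of ℂ[[x,y]]/(f, x·f_x, y·f_x, x·f_y, y·f_y) equals 8. -/

import Mathlib

open MvPolynomial

noncomputable section TjurinaAux

abbrev Rr : Type := MvPowerSeries (Fin 2) ℂ

def E (a b : ℕ) : Fin 2 →₀ ℕ := Finsupp.single 0 a + Finsupp.single 1 b

lemma E0 (a b : ℕ) : E a b 0 = a := by simp [E, Finsupp.single_apply]
lemma E1 (a b : ℕ) : E a b 1 = b := by simp [E, Finsupp.single_apply]

lemma eq_E (e : Fin 2 →₀ ℕ) : e = E (e 0) (e 1) := by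
  ext i
  fin_cases i
  · simpa using (E0 (e 0) (e 1)).symm
  · simpa using (E1 (e 0) (e 1)).symm

lemma E_le (a b : ℕ) (e : Fin 2 →₀ ℕ) : E a b ≤ e ↔ a ≤ e 0 ∧ b ≤ e 1 := by
  rw [Finsupp.le_def]
  constructor
  · intro h
    exact ⟨by simpa [E0] using h 0, by simpa [E1] using h 1⟩
  · rintro ⟨h1, h2⟩ i
    fin_cases i
    · simpa [E0] using h1
    · simpa [E1] using h2

def mm (a b : ℕ) : Rr := MvPowerSeries.monomial (E a b) 1

def B : Fin 8 → (Fin 2 →₀ ℕ)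
  | ⟨0, _⟩ => E 0 0
  | ⟨1, _⟩ => E 1 0
  | ⟨2, _⟩ => E 0 1
  | ⟨3, _⟩ => E 2 0
  | ⟨4, _⟩ => E 1 1
  | ⟨5, _⟩ => E 0 2
  | ⟨6, _⟩ => E 1 2
  | ⟨7, _⟩ => E 0 3

def sh (d : Fin 2 →₀ ℕ) (g : Rr) : Rr := fun e => g (e + d)
def shc (d : Fin 2 →₀ ℕ) (g : Rr) : Rr := fun e => if e 0 = 0 then g (e + d) else 0

def P : Ideal Rr := Ideal.span {mm 3 0, mm 2 1, mm 1 3, mm 0 4}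

lemma B_lt (i : Fin 8) :
    B i 0 + B i 1 ≤ 3 ∧ B i 0 ≤ 2 ∧ (B i 0 = 2 → B i 1 = 0) ∧ (B i 0 = 1 → B i 1 ≤ 2) := by
  fin_cases i <;> simp [B, E0, E1]

lemma B_inj : Function.Injective B := by
  intro i j h
  fin_cases i <;> fin_cases j <;> simp only [B] at h <;>
    first
      | rfl
      | simpa [E0, E1] using congrArg (fun t : Fin 2 →₀ ℕ => t 0) h
      | simpa [E0, E1] using congrArg (fun t : Fin 2 →₀ ℕ => t 1) h

lemma coeff_eq_zero_of_mem {g : Rr} (hg : g ∈ P) (i : Fin 8) :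
    MvPowerSeries.coeff (B i) g = 0 := by
  have key : ∀ (x : Rr), x ∈ P → ∀ h : Rr, ∀ i : Fin 8,
      MvPowerSeries.coeff (B i) (h * x) = 0 := by
    intro x hx
    refine Submodule.span_induction ?_ ?_ ?_ ?_ hx
    · intro x hx h i
      simp only [Set.mem_insert_iff, Set.mem_singleton_iff] at hx
      have hB := B_lt i
      rcases hx with rfl | rfl | rfl | rfl <;>
      · rw [mm, MvPowerSeries.coeff_mul_monomial, if_neg]
        rw [E_le]
        omega
    · intro h i; simp
    · intro x y hx hy ihx ihy h i
      simp [mul_add, ihx h i, ihy h i]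
    · intro a x hx ih h i
      rw [smul_eq_mul, ← mul_assoc]
      exact ih (h * a) i
  simpa using key g hg 1 i

lemma coeff_sum (c : Fin 8 → ℂ) (j : Fin 8) :
    MvPowerSeries.coeff (B j) (∑ i, c i • MvPowerSeries.monomial (B i) (1 : ℂ)) = c j := by
  rw [map_sum, Finset.sum_eq_single j]
  · rw [map_smul, MvPowerSeries.coeff_monomial, if_pos rfl]; simp
  · intro i _ hij
    rw [map_smul, MvPowerSeries.coeff_monomial, if_neg, smul_zero]
    exact fun h => hij (B_inj h.symm)
  · intro h; exact absurd (Finset.mem_univ j) h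

lemma mem_of_coeff_eq_zero {g : Rr} (hg : ∀ i : Fin 8, MvPowerSeries.coeff (B i) g = 0) :
    g ∈ P := by
  classical
  have hg' : ∀ a b : ℕ, a + b ≤ 3 → a ≤ 2 → ¬(a = 2 ∧ 1 ≤ b) → g (E a b) = 0 := by
    intro a b hab ha hnot
    have h2 : a ≤ 2 := ha
    have h3 : b ≤ 3 := by omega
    interval_cases a <;> interval_cases b <;>
      first
        | omega
        | simpa [B, MvPowerSeries.coeff_apply] using hg 0
        | simpa [B, MvPowerSeries.coeff_apply] using hg 1
        | simpa [B, MvPowerSeries.coeff_apply] using hg 2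
        | simpa [B, MvPowerSeries.coeff_apply] using hg 3
        | simpa [B, MvPowerSeries.coeff_apply] using hg 4
        | simpa [B, MvPowerSeries.coeff_apply] using hg 5
        | simpa [B, MvPowerSeries.coeff_apply] using hg 6
        | simpa [B, MvPowerSeries.coeff_apply] using hg 7
  have key : g = sh (E 3 0) g * mm 3 0 + shc (E 2 1) g * mm 2 1
      + shc (E 1 3) g * mm 1 3 + shc (E 0 4) g * mm 0 4 := by
    ext e
    simp only [map_add, mm, MvPowerSeries.coeff_mul_monomial, mul_one]
    simp only [MvPowerSeries.coeff_apply, sh, shc, E_le, Finsupp.tsub_apply, E0, E1,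
      Nat.le_zero, Nat.zero_le, true_and, and_true]
    split_ifs <;>
      first
        | (exfalso; omega)
        | (rw [tsub_add_cancel_of_le ((E_le 3 0 e).mpr (by omega))]; ring)
        | (rw [tsub_add_cancel_of_le ((E_le 2 1 e).mpr (by omega))]; ring)
        | (rw [tsub_add_cancel_of_le ((E_le 1 3 e).mpr (by omega))]; ring)
        | (rw [tsub_add_cancel_of_le ((E_le 0 4 e).mpr (by omega))]; ring)
        | (simpa using (congrArg g (eq_E e)).trans (hg' (e 0) (e 1) (by omega) (by omega) (by omega)))
  rw [key]
  refine Ideal.add_mem _ (Ideal.add_mem _ (Ideal.add_mem _ ?_ ?_) ?_) ?_ <;>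
    exact Ideal.mul_mem_left _ _ (Ideal.subset_span (by simp))

end TjurinaAux

lemma Xmul (a b : ℕ) : (MvPowerSeries.X 0 : Rr) ^ a * MvPowerSeries.X 1 ^ b = mm a b := by
  rw [MvPowerSeries.X_pow_eq, MvPowerSeries.X_pow_eq, MvPowerSeries.monomial_mul_monomial, mul_one]
  rfl

lemma cast_f :
    ((X 0 ^ 3 + X 1 ^ 4 : MvPolynomial (Fin 2) ℂ) : MvPowerSeries (Fin 2) ℂ) = mm 3 0 + mm 0 4 := by
  push_cast
  simp [mm, E, MvPowerSeries.X_pow_eq]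

lemma cast_xfx :
    (((X 0 : MvPolynomial (Fin 2) ℂ) * pderiv 0 (X 0 ^ 3 + X 1 ^ 4) : MvPolynomial (Fin 2) ℂ) :
      MvPowerSeries (Fin 2) ℂ) = MvPowerSeries.C (σ := Fin 2) (R := ℂ) 3 * mm 3 0 := by
  rw [show (X 0 : MvPolynomial (Fin 2) ℂ) * pderiv 0 (X 0 ^ 3 + X 1 ^ 4) = C 3 * X 0 ^ 3 from by
    rw [map_ofNat]; simp [pderiv_pow]; ring]
  push_cast
  simp [mm, E, MvPowerSeries.X_pow_eq]

lemma cast_yfx :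
    (((X 1 : MvPolynomial (Fin 2) ℂ) * pderiv 0 (X 0 ^ 3 + X 1 ^ 4) : MvPolynomial (Fin 2) ℂ) :
      MvPowerSeries (Fin 2) ℂ) = MvPowerSeries.C (σ := Fin 2) (R := ℂ) 3 * mm 2 1 := by
  rw [show (X 1 : MvPolynomial (Fin 2) ℂ) * pderiv 0 (X 0 ^ 3 + X 1 ^ 4) = C 3 * (X 0 ^ 2 * X 1) from by
    rw [map_ofNat]; simp [pderiv_pow]; ring]
  push_cast
  rw [show (MvPowerSeries.X 1 : Rr) = MvPowerSeries.X 1 ^ 1 from (pow_one _).symm, Xmul]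

lemma cast_xfy :
    (((X 0 : MvPolynomial (Fin 2) ℂ) * pderiv 1 (X 0 ^ 3 + X 1 ^ 4) : MvPolynomial (Fin 2) ℂ) :
      MvPowerSeries (Fin 2) ℂ) = MvPowerSeries.C (σ := Fin 2) (R := ℂ) 4 * mm 1 3 := by
  rw [show (X 0 : MvPolynomial (Fin 2) ℂ) * pderiv 1 (X 0 ^ 3 + X 1 ^ 4) = C 4 * (X 0 * X 1 ^ 3) from by
    rw [map_ofNat]; simp [pderiv_pow]; ring]
  push_cast
  rw [show (MvPowerSeries.X 0 : Rr) = MvPowerSeries.X 0 ^ 1 from (pow_one _).symm, Xmul]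

lemma cast_yfy :
    (((X 1 : MvPolynomial (Fin 2) ℂ) * pderiv 1 (X 0 ^ 3 + X 1 ^ 4) : MvPolynomial (Fin 2) ℂ) :
      MvPowerSeries (Fin 2) ℂ) = MvPowerSeries.C (σ := Fin 2) (R := ℂ) 4 * mm 0 4 := by
  rw [show (X 1 : MvPolynomial (Fin 2) ℂ) * pderiv 1 (X 0 ^ 3 + X 1 ^ 4) = C 4 * X 1 ^ 4 from by
    rw [map_ofNat]; simp [pderiv_pow]; ring]
  push_cast
  simp [mm, E, MvPowerSeries.X_pow_eq]

def Sgen : Set Rr :=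
  {(↑(X 0 ^ 3 + X 1 ^ 4 : MvPolynomial (Fin 2) ℂ) : Rr),
   (↑((X 0 : MvPolynomial (Fin 2) ℂ) * pderiv 0 (X 0 ^ 3 + X 1 ^ 4 : MvPolynomial (Fin 2) ℂ)) : Rr),
   (↑((X 1 : MvPolynomial (Fin 2) ℂ) * pderiv 0 (X 0 ^ 3 + X 1 ^ 4 : MvPolynomial (Fin 2) ℂ)) : Rr),
   (↑((X 0 : MvPolynomial (Fin 2) ℂ) * pderiv 1 (X 0 ^ 3 + X 1 ^ 4 : MvPolynomial (Fin 2) ℂ)) : Rr),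
   (↑((X 1 : MvPolynomial (Fin 2) ℂ) * pderiv 1 (X 0 ^ 3 + X 1 ^ 4 : MvPolynomial (Fin 2) ℂ)) : Rr)}

lemma memS1 : (↑((X 0 : MvPolynomial (Fin 2) ℂ) * pderiv 0 (X 0 ^ 3 + X 1 ^ 4 : MvPolynomial (Fin 2) ℂ)) : Rr) ∈ Sgen :=
  Or.inr (Or.inl rfl)
lemma memS2 : (↑((X 1 : MvPolynomial (Fin 2) ℂ) * pderiv 0 (X 0 ^ 3 + X 1 ^ 4 : MvPolynomial (Fin 2) ℂ)) : Rr) ∈ Sgen :=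
  Or.inr (Or.inr (Or.inl rfl))
lemma memS3 : (↑((X 0 : MvPolynomial (Fin 2) ℂ) * pderiv 1 (X 0 ^ 3 + X 1 ^ 4 : MvPolynomial (Fin 2) ℂ)) : Rr) ∈ Sgen :=
  Or.inr (Or.inr (Or.inr (Or.inl rfl)))
lemma memS4 : (↑((X 1 : MvPolynomial (Fin 2) ℂ) * pderiv 1 (X 0 ^ 3 + X 1 ^ 4 : MvPolynomial (Fin 2) ℂ)) : Rr) ∈ Sgen :=
  Or.inr (Or.inr (Or.inr (Or.inr rfl)))

lemma gen_mem (a : ℕ) (ha : a ≠ 0) (x : Rr) (hx : x ∈ Sgen)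
    (m : Rr) (hc : x = MvPowerSeries.C (σ := Fin 2) (R := ℂ) a * m) : m ∈ Ideal.span Sgen := by
  have hmem := Ideal.mul_mem_left (Ideal.span Sgen)
    (MvPowerSeries.C (σ := Fin 2) (R := ℂ) (a : ℂ)⁻¹) (Ideal.subset_span hx)
  rwa [hc, ← mul_assoc, ← map_mul, inv_mul_cancel₀ (by exact_mod_cast ha), map_one, one_mul] at hmem

lemma hspan : Ideal.span Sgen = P := by
  apply le_antisymm
  · rw [Ideal.span_le]
    rintro x hx
    rcases hx with rfl | rfl | rfl | rfl | rfl
    · rw [cast_f]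
      exact Ideal.add_mem _ (Ideal.subset_span (by simp)) (Ideal.subset_span (by simp))
    · rw [cast_xfx]; exact Ideal.mul_mem_left _ _ (Ideal.subset_span (by simp))
    · rw [cast_yfx]; exact Ideal.mul_mem_left _ _ (Ideal.subset_span (by simp))
    · rw [cast_xfy]; exact Ideal.mul_mem_left _ _ (Ideal.subset_span (by simp))
    · rw [cast_yfy]; exact Ideal.mul_mem_left _ _ (Ideal.subset_span (by simp))
  · rw [P, Ideal.span_le]
    rintro x hx
    rcases hx with rfl | rfl | rfl | rfl
    · exact gen_mem 3 (by norm_num) _ memS1 _ (by rw [cast_xfx]; norm_num)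
    · exact gen_mem 3 (by norm_num) _ memS2 _ (by rw [cast_yfx]; norm_num)
    · exact gen_mem 4 (by norm_num) _ memS3 _ (by rw [cast_xfy]; norm_num)
    · exact gen_mem 4 (by norm_num) _ memS4 _ (by rw [cast_yfy]; norm_num)

noncomputable def Mlin : (Fin 8 → ℂ) →ₗ[ℂ] Rr :=
  ∑ i, (LinearMap.proj i).smulRight (MvPowerSeries.monomial (B i) 1)

lemma Mlin_apply (c : Fin 8 → ℂ) :
    Mlin c = ∑ i, c i • MvPowerSeries.monomial (B i) (1 : ℂ) := by
  simp [Mlin]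

noncomputable def σlin : (Fin 8 → ℂ) →ₗ[ℂ] (Rr ⧸ P) :=
  (Ideal.Quotient.mkₐ ℂ P).toLinearMap.comp Mlin

lemma σlin_bij : Function.Bijective σlin := by
  constructor
  · rw [injective_iff_map_eq_zero]
    intro c hc
    have hmem : Mlin c ∈ P := by
      rwa [show σlin c = Ideal.Quotient.mk P (Mlin c) from rfl,
        Ideal.Quotient.eq_zero_iff_mem] at hc
    funext j
    have := coeff_eq_zero_of_mem hmem j
    rwa [Mlin_apply, coeff_sum] at this
  · intro q
    obtain ⟨g, rfl⟩ := Ideal.Quotient.mk_surjective q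
    refine ⟨fun i => MvPowerSeries.coeff (B i) g, ?_⟩
    have hsub : Mlin (fun i => MvPowerSeries.coeff (B i) g) - g ∈ P := by
      apply mem_of_coeff_eq_zero
      intro j
      rw [map_sub, Mlin_apply, coeff_sum]
      simp
    rw [show σlin _ = Ideal.Quotient.mk P (Mlin _) from rfl]
    rwa [Ideal.Quotient.mk_eq_mk_iff_sub_mem]

/-- For f = x³ + y⁴, dim_ℂ ℂ[[x,y]]/(f, x·f_x, y·f_x, x·f_y, y·f_y) = 8
(the Tjurina number of E₆⁺). -/
theorem stmt_18 :
    let f : MvPolynomial (Fin 2) ℂ := X 0 ^ 3 + X 1 ^ 4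
    Module.finrank ℂ (MvPowerSeries (Fin 2) ℂ ⧸
        Ideal.span ({(↑f : MvPowerSeries (Fin 2) ℂ),
          ↑((X 0 : MvPolynomial (Fin 2) ℂ) * pderiv 0 f), ↑((X 1 : MvPolynomial (Fin 2) ℂ) * pderiv 0 f),
          ↑((X 0 : MvPolynomial (Fin 2) ℂ) * pderiv 1 f), ↑((X 1 : MvPolynomial (Fin 2) ℂ) * pderiv 1 f)} : Set (MvPowerSeries (Fin 2) ℂ)))
      = 8 := by
  show Module.finrank ℂ (Rr ⧸ Ideal.span Sgen) = 8
  rw [hspan]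
  rw [← LinearEquiv.finrank_eq (LinearEquiv.ofBijective σlin σlin_bij)]
  simp [Module.finrank_pi]
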